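/- Let X = (λ^{2/3} + √(4+λ^{4/3}))², λ ≥ 0. Then X ≥ 8 if and only if λ ≥ 2^{-3/4}, and the inequality (X-8)³(X³ - 12X² - 32) ≤ 0 holds exactly for X ∈ [8, 2(2 + 2^{2/3} + 2^{4/3})]. -/
import Mathlib


set_option maxHeartbeats 1600000 in
/-- Let `X = (λ^{2/3} + √(4+λ^{4/3}))²`, `λ ≥ 0`. Then `X ≥ 8` iff `λ ≥ 2^{-3/4}`, and
`(X-8)³(X³ - 12X² - 32) ≤ 0` holds exactly for `X ∈ [8, 2(2 + 2^{2/3} + 2^{4/3})]`. -/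
theorem stmt_11 (l X : ℝ) (hl : 0 ≤ l)
    (hX : X = (l ^ ((2:ℝ)/3) + Real.sqrt (4 + l ^ ((4:ℝ)/3)))^2) :
    (8 ≤ X ↔ (2:ℝ) ^ (-(3:ℝ)/4) ≤ l) ∧
    ((X - 8)^3 * (X^3 - 12*X^2 - 32) ≤ 0 ↔
      (8 ≤ X ∧ X ≤ 2*(2 + (2:ℝ) ^ ((2:ℝ)/3) + (2:ℝ) ^ ((4:ℝ)/3)))) := by
  -- setup for part 1
  set t := l ^ ((2:ℝ)/3) with htdef
  have ht : 0 ≤ t := Real.rpow_nonneg hl _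
  have ht2 : t ^ 2 = l ^ ((4:ℝ)/3) := by
    rw [htdef, ← Real.rpow_natCast (l ^ ((2:ℝ)/3)) 2, ← Real.rpow_mul hl]
    norm_num
  have hs0 : 0 ≤ Real.sqrt (4 + l ^ ((4:ℝ)/3)) := Real.sqrt_nonneg _
  set s := Real.sqrt (4 + l ^ ((4:ℝ)/3)) with hsdef
  have hs2 : s ^ 2 = 4 + t ^ 2 := by
    rw [hsdef, Real.sq_sqrt, ht2]
    rw [← ht2]; positivity
  -- l ≥ 2^{-3/4} ↔ t² ≥ 1/2
  have hiff1 : (2:ℝ) ^ (-(3:ℝ)/4) ≤ l ↔ (1:ℝ)/2 ≤ t ^ 2 := by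
    rw [ht2]
    constructor
    · intro h
      have := Real.rpow_le_rpow (by positivity) h (by norm_num : (0:ℝ) ≤ 4/3)
      rw [← Real.rpow_mul (by norm_num : (0:ℝ) ≤ 2)] at this
      norm_num at this
      exact this
    · intro h
      have h2 : ((2:ℝ) ^ (-(3:ℝ)/4)) ^ ((4:ℝ)/3) ≤ l ^ ((4:ℝ)/3) := by
        rw [← Real.rpow_mul (by norm_num : (0:ℝ) ≤ 2)]
        norm_num
        exact h
      exact (Real.rpow_le_rpow_iff (by positivity) hl (by norm_num)).mp h2
  clear htdef hsdef ht2
  clear_value t s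
  have part1 : 8 ≤ X ↔ (2:ℝ) ^ (-(3:ℝ)/4) ≤ l := by
    rw [hiff1, hX]
    constructor
    · intro h
      have key : 2 - t ^ 2 ≤ t * s := by nlinarith
      nlinarith [mul_nonneg ht hs0, sq_nonneg (t*s - (2 - t^2)), sq_nonneg (t*s + (2 - t^2))]
    · intro h
      have key : 2 - t ^ 2 ≤ t * s := by
        nlinarith [mul_nonneg ht hs0, sq_nonneg (t*s - (2 - t^2)), sq_nonneg (t*s + (2 - t^2))]
      nlinarith
  -- setup for part 2
  obtain ⟨c, hc0, hc3, h23, h43⟩ :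
      ∃ c : ℝ, 0 < c ∧ c ^ 3 = 2 ∧ (2:ℝ) ^ ((2:ℝ)/3) = c ^ 2 ∧ (2:ℝ) ^ ((4:ℝ)/3) = 2 * c := by
    refine ⟨(2:ℝ) ^ ((1:ℝ)/3), Real.rpow_pos_of_pos (by norm_num) _, ?_, ?_, ?_⟩
    · rw [← Real.rpow_natCast ((2:ℝ) ^ ((1:ℝ)/3)) 3, ← Real.rpow_mul (by norm_num : (0:ℝ) ≤ 2)]
      norm_num
    · rw [← Real.rpow_natCast ((2:ℝ) ^ ((1:ℝ)/3)) 2, ← Real.rpow_mul (by norm_num : (0:ℝ) ≤ 2)]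
      norm_num
    · have h4 : (2:ℝ) ^ ((4:ℝ)/3) = ((2:ℝ) ^ ((1:ℝ)/3)) ^ 4 := by
        rw [← Real.rpow_natCast ((2:ℝ) ^ ((1:ℝ)/3)) 4, ← Real.rpow_mul (by norm_num : (0:ℝ) ≤ 2)]
        norm_num
      have h13 : ((2:ℝ) ^ ((1:ℝ)/3)) ^ 3 = 2 := by
        rw [← Real.rpow_natCast ((2:ℝ) ^ ((1:ℝ)/3)) 3, ← Real.rpow_mul (by norm_num : (0:ℝ) ≤ 2)]
        norm_num
      rw [h4]
      linear_combination (2:ℝ)^((1:ℝ)/3) * h13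
  have hclb : (5:ℝ)/4 < c := by
    have : ((5:ℝ)/4) ^ 3 < c ^ 3 := by rw [hc3]; norm_num
    exact lt_of_pow_lt_pow_left₀ 3 hc0.le this
  have hcub : c < (13:ℝ)/10 := by
    have : c ^ 3 < ((13:ℝ)/10) ^ 3 := by rw [hc3]; norm_num
    exact lt_of_pow_lt_pow_left₀ 3 (by norm_num) this
  set r := 4 + 4*c + 2*c^2 with hrdef
  have hrval : 2*(2 + (2:ℝ) ^ ((2:ℝ)/3) + (2:ℝ) ^ ((4:ℝ)/3)) = r := by
    rw [h23, h43, hrdef]; ring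
  have hroot : r ^ 3 - 12 * r ^ 2 - 32 = 0 := by
    rw [hrdef]
    linear_combination (8*c^3 + 48*c^2 + 96*c + 80) * hc3
  have hr8 : (8:ℝ) < r := by rw [hrdef]; nlinarith
  have hrlb : (97:ℝ)/8 < r := by rw [hrdef]; nlinarith
  clear hrdef
  clear_value r
  have hfac : ∀ Y : ℝ, Y^3 - 12*Y^2 - 32 = (Y - r) * (Y^2 + (r-12)*Y + (r^2 - 12*r)) := by
    intro Y
    linear_combination hroot
  have hQ : ∀ Y : ℝ, 0 < Y^2 + (r-12)*Y + (r^2 - 12*r) := by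
    intro Y
    have h0 : 0 < r - 97/8 := by linarith
    have hdisc : (r-12)^2 < 4*(r^2 - 12*r) := by nlinarith [mul_pos h0 h0]
    nlinarith [sq_nonneg (Y + (r-12)/2)]
  refine ⟨part1, ?_⟩
  rw [hrval]
  constructor
  · intro h
    constructor
    · by_contra hlt
      push_neg at hlt
      have h1 : (X - 8)^3 < 0 := by
        have : X - 8 < 0 := by linarith
        exact Odd.pow_neg ⟨1, by norm_num⟩ this
      have h2 : X^3 - 12*X^2 - 32 < 0 := by
        rw [hfac X]
        exact mul_neg_of_neg_of_pos (by linarith) (hQ X)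
      nlinarith [mul_pos_of_neg_of_neg h1 h2]
    · by_contra hlt
      push_neg at hlt
      have h1 : 0 < (X - 8)^3 := pow_pos (by linarith) 3
      have h2 : 0 < X^3 - 12*X^2 - 32 := by
        rw [hfac X]
        exact mul_pos (by linarith) (hQ X)
      nlinarith [mul_pos h1 h2]
  · rintro ⟨h8, hr⟩
    have h1 : 0 ≤ (X - 8)^3 := pow_nonneg (by linarith) 3
    have h2 : X^3 - 12*X^2 - 32 ≤ 0 := by
      rw [hfac X]
      exact mul_nonpos_of_nonpos_of_nonneg (by linarith) (hQ X).le
    exact mul_nonpos_of_nonneg_of_nonpos h1 h2
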